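/- Let U ∈ ℝ^{N×K} have orthonormal columns and satisfy U = D^{-1/2} Π D(I,I)^{1/2} U(I,:) where D is N×N diagonal with diagonal entries in [τ+δ_min, τ+δ_max], Π ∈ ℝ^{N×K} is row-stochastic (nonnegative rows summing to 1) with rank K, and Π(I,:) = I_K. Then for every i ∈ [N], sqrt((τ+δ_min)/(τ+δ_max)) · 1/sqrt(K λ₁(Π'Π)) ≤ ‖U(i,:)‖₂ ≤ sqrt((τ+δ_max)/(τ+δ_min)) · 1/sqrt(λ_K(Π'Π)), where λ₁ and λ_K denote the largest and smallest eigenvalues of Π'Π. -/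

import Mathlib

open Matrix
open scoped RealInnerProductSpace

lemma cs_dot {K : ℕ} (x y : Fin K → ℝ) : (x ⬝ᵥ y) ^ 2 ≤ (x ⬝ᵥ x) * (y ⬝ᵥ y) := by
  have := Finset.sum_mul_sq_le_sq_mul_sq Finset.univ x y
  simpa [dotProduct, sq] using this

lemma dot_self_nonneg' {n : Type*} [Fintype n] (x : n → ℝ) : 0 ≤ x ⬝ᵥ x :=
  Finset.sum_nonneg fun _ _ => mul_self_nonneg _

lemma dot_self_pos {n : Type*} [Fintype n] (x : n → ℝ) (hx : x ≠ 0) : 0 < x ⬝ᵥ x :=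
  (dot_self_nonneg' x).lt_of_ne fun h => hx (dotProduct_self_eq_zero.mp h.symm)

lemma quot_up (a A B C : ℝ) (ha : 0 < a) (hA : 0 < A) (hC : 0 ≤ C)
    (hcs : A ^ 2 ≤ C * B) (h1 : a * B ≤ A) : a * A ≤ C := by nlinarith

lemma quot_low (b A B C : ℝ) (hb : 0 < b) (hA : 0 ≤ A) (hC : 0 < C)
    (hcs : C ^ 2 ≤ A * B) (hzz : B ≤ b * C) : C ≤ b * A := by nlinarith

lemma rayleigh_aux {K : ℕ} (A : Matrix (Fin K) (Fin K) ℝ) (hA : A.IsHermitian)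
    (lam1 lamK : ℝ)
    (h1 : ∀ μ, Module.End.HasEigenvalue (Matrix.toLin' A) μ → μ ≤ lam1)
    (hK : ∀ μ, Module.End.HasEigenvalue (Matrix.toLin' A) μ → lamK ≤ μ)
    (v : Fin K → ℝ) :
    lamK * (v ⬝ᵥ v) ≤ v ⬝ᵥ (A *ᵥ v) ∧ v ⬝ᵥ (A *ᵥ v) ≤ lam1 * (v ⬝ᵥ v) := by
  classical
  set b := hA.eigenvectorBasis with hb
  have heig : ∀ j, Module.End.HasEigenvalue (Matrix.toLin' A) (hA.eigenvalues j) := by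
    intro j
    apply Module.End.hasEigenvalue_of_hasEigenvector (x := (⇑(b j) : Fin K → ℝ))
    constructor
    · rw [Module.End.mem_eigenspace_iff, Matrix.toLin'_apply]
      exact hA.mulVec_eigenvectorBasis j
    · intro h; apply b.orthonormal.ne_zero j; ext k; simpa using congrFun h k
  have hAt : Aᵀ = A := (by simpa using hA : A.IsSymm)
  have hinner : ∀ x y : EuclideanSpace ℝ (Fin K), ⟪x, y⟫ = x ⬝ᵥ y := by
    intro x y
    simp [PiLp.inner_apply, dotProduct, RCLike.inner_apply]
    exact Finset.sum_congr rfl fun _ _ => mul_comm _ _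
  have hvv : v ⬝ᵥ v = ∑ j, ((b j : Fin K → ℝ) ⬝ᵥ v) ^ 2 := by
    have := (b.sum_inner_mul_inner (WithLp.toLp 2 v) (WithLp.toLp 2 v)).symm
    simp only [hinner, WithLp.ofLp_toLp] at this
    rw [this]
    apply Finset.sum_congr rfl
    intro j _
    rw [sq, dotProduct_comm]
  have hterm : ∀ j, ((b j : Fin K → ℝ) ⬝ᵥ (A *ᵥ v)) =
      hA.eigenvalues j * ((b j : Fin K → ℝ) ⬝ᵥ v) := by
    intro j
    have h2 : A *ᵥ (b j : Fin K → ℝ) = hA.eigenvalues j • (b j : Fin K → ℝ) :=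
      hA.mulVec_eigenvectorBasis j
    rw [dotProduct_mulVec, ← mulVec_transpose, hAt, h2, smul_dotProduct, smul_eq_mul]
  have hAv : v ⬝ᵥ (A *ᵥ v) = ∑ j, hA.eigenvalues j * ((b j : Fin K → ℝ) ⬝ᵥ v) ^ 2 := by
    have := (b.sum_inner_mul_inner (WithLp.toLp 2 v) (WithLp.toLp 2 (A *ᵥ v))).symm
    simp only [hinner, WithLp.ofLp_toLp] at this
    rw [this]
    apply Finset.sum_congr rfl
    intro j _
    rw [hterm j, sq, dotProduct_comm v]
    ring
  constructor
  · rw [hvv, hAv, Finset.mul_sum]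
    apply Finset.sum_le_sum
    intro j _
    exact mul_le_mul_of_nonneg_right (hK _ (heig j)) (sq_nonneg _)
  · rw [hvv, hAv, Finset.mul_sum]
    apply Finset.sum_le_sum
    intro j _
    exact mul_le_mul_of_nonneg_right (h1 _ (heig j)) (sq_nonneg _)

/-- bounds on the row norms of `U`:
`√((τ+δmin)/(τ+δmax)) / √(K λ₁(ΠᵀΠ)) ≤ ‖U(i,:)‖₂ ≤ √((τ+δmax)/(τ+δmin)) / √(λ_K(ΠᵀΠ))`. -/
theorem row_norm_bounds {N K : ℕ}
    (τ δmin δmax : ℝ) (hτ : 0 ≤ τ) (hδmin : 0 < δmin) (hδ : δmin ≤ δmax)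
    (d : Fin N → ℝ) (hd : ∀ i, τ + δmin ≤ d i ∧ d i ≤ τ + δmax)
    (Pm U : Matrix (Fin N) (Fin K) ℝ)
    (hnn : ∀ i k, 0 ≤ Pm i k) (hrow : ∀ i, ∑ k, Pm i k = 1)
    (hPrank : Pm.rank = K)
    (I : Fin K → Fin N) (hI : Function.Injective I)
    (hpure : Pm.submatrix I id = 1)
    (hUo : Uᵀ * U = 1)
    (hUeq : U = Matrix.diagonal (fun i => (Real.sqrt (d i))⁻¹) * Pm *
      Matrix.diagonal (fun k => Real.sqrt (d (I k))) * U.submatrix I id)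
    (lam1 lamK : ℝ)
    (hlam1 : IsGreatest {μ : ℝ |
      Module.End.HasEigenvalue (Matrix.toLin' (Pmᵀ * Pm)) μ} lam1)
    (hlamK : IsLeast {μ : ℝ |
      Module.End.HasEigenvalue (Matrix.toLin' (Pmᵀ * Pm)) μ} lamK) :
    ∀ i,
      Real.sqrt ((τ + δmin) / (τ + δmax)) * (Real.sqrt ((K : ℝ) * lam1))⁻¹ ≤
        Real.sqrt (∑ j, (U i j) ^ 2) ∧
      Real.sqrt (∑ j, (U i j) ^ 2) ≤
        Real.sqrt ((τ + δmax) / (τ + δmin)) * (Real.sqrt lamK)⁻¹ := by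
  classical
  intro i0
  have ha : 0 < τ + δmin := by linarith
  have hb : 0 < τ + δmax := by linarith
  have hdpos : ∀ i, 0 < d i := fun i => lt_of_lt_of_le ha (hd i).1
  -- K > 0
  have hKpos : 0 < K := by
    rcases Nat.eq_zero_or_pos K with h0 | h
    · exfalso
      subst h0
      obtain ⟨v, hv⟩ := hlamK.1.exists_hasEigenvector
      exact hv.2 (funext fun x => x.elim0)
    · exact h
  have hKR : (0:ℝ) < (K:ℝ) := Nat.cast_pos.mpr hKpos
  -- Rayleigh bounds
  have hA : (Pmᵀ * Pm).IsHermitian := by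
    simpa using Matrix.isHermitian_conjTranspose_mul_self Pm
  have hq : ∀ v : Fin K → ℝ,
      v ⬝ᵥ ((Pmᵀ * Pm) *ᵥ v) = (Pm *ᵥ v) ⬝ᵥ (Pm *ᵥ v) := by
    intro v
    rw [← mulVec_mulVec, dotProduct_mulVec, vecMul_transpose]
  have hray : ∀ v : Fin K → ℝ, lamK * (v ⬝ᵥ v) ≤ (Pm *ᵥ v) ⬝ᵥ (Pm *ᵥ v) ∧
      (Pm *ᵥ v) ⬝ᵥ (Pm *ᵥ v) ≤ lam1 * (v ⬝ᵥ v) := by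
    intro v
    have := rayleigh_aux (Pmᵀ * Pm) hA lam1 lamK
      (fun μ hμ => hlam1.2 hμ) (fun μ hμ => hlamK.2 hμ) v
    rwa [hq v] at this
  -- positivity of dot products & injectivity
  have hker : LinearMap.ker Pm.mulVecLin = ⊥ := by
    have hrn := LinearMap.finrank_range_add_finrank_ker Pm.mulVecLin
    have hdom : Module.finrank ℝ (Fin K → ℝ) = K := by simp
    have hr : Module.finrank ℝ (LinearMap.range Pm.mulVecLin) = K := hPrank
    rw [hdom, hr] at hrn
    have h0 : Module.finrank ℝ (LinearMap.ker Pm.mulVecLin) = 0 := by omega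
    exact Submodule.finrank_eq_zero.mp h0
  have hPm_nz : ∀ v : Fin K → ℝ, v ≠ 0 → 0 < (Pm *ᵥ v) ⬝ᵥ (Pm *ᵥ v) := by
    intro v hv
    refine dot_self_pos (Pm *ᵥ v) fun h => ?_
    apply hv
    have hmem : v ∈ LinearMap.ker Pm.mulVecLin := by
      rw [LinearMap.mem_ker, Matrix.mulVecLin_apply]
      exact h
    rw [hker] at hmem
    simpa using hmem
  -- eigenvalue positivity
  have hlamKpos : 0 < lamK := by
    obtain ⟨v, hv⟩ := hlamK.1.exists_hasEigenvector
    have h1 : (Pmᵀ * Pm) *ᵥ v = lamK • v := by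
      have := hv.apply_eq_smul
      rwa [Matrix.toLin'_apply] at this
    have h2 : (Pm *ᵥ v) ⬝ᵥ (Pm *ᵥ v) = lamK * (v ⬝ᵥ v) := by
      rw [← hq v, h1, dotProduct_smul, smul_eq_mul]
    have h3 := hPm_nz v hv.2
    have h4 := dot_self_pos v hv.2
    rw [h2] at h3
    by_contra hc
    push_neg at hc
    nlinarith
  have hlam1pos : 0 < lam1 := lt_of_lt_of_le hlamKpos (hlamK.2 hlam1.1)
  -- the matrix Y and the key identity
  set Y := Matrix.diagonal (fun k => Real.sqrt (d (I k))) * U.submatrix I id with hY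
  set G := Pmᵀ * Matrix.diagonal (fun i => ((d i)⁻¹ : ℝ)) * Pm with hG
  have key : U = Matrix.diagonal (fun i => (Real.sqrt (d i))⁻¹) * (Pm * Y) := by
    rw [hUeq]; simp only [Matrix.mul_assoc]; rfl
  have h2 : Matrix.diagonal (fun i => ((Real.sqrt (d i))⁻¹ : ℝ)) *
      Matrix.diagonal (fun i => ((Real.sqrt (d i))⁻¹ : ℝ)) =
      Matrix.diagonal (fun i => ((d i)⁻¹ : ℝ)) := by
    rw [diagonal_mul_diagonal]
    have : (fun i => (Real.sqrt (d i))⁻¹ * (Real.sqrt (d i))⁻¹) = fun i => ((d i)⁻¹ : ℝ) :=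
      funext fun i => by rw [← mul_inv, Real.mul_self_sqrt (hdpos i).le]
    rw [this]
  have hYGY : Yᵀ * G * Y = 1 := by
    calc Yᵀ * G * Y
        = Yᵀ * (Pmᵀ * (Matrix.diagonal (fun i => ((Real.sqrt (d i))⁻¹ : ℝ)) *
            Matrix.diagonal (fun i => ((Real.sqrt (d i))⁻¹ : ℝ))) * Pm) * Y := by rw [h2]
      _ = (Matrix.diagonal (fun i => ((Real.sqrt (d i))⁻¹ : ℝ)) * (Pm * Y))ᵀ *
          (Matrix.diagonal (fun i => ((Real.sqrt (d i))⁻¹ : ℝ)) * (Pm * Y)) := by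
          simp only [transpose_mul, diagonal_transpose, Matrix.mul_assoc]
      _ = 1 := by rw [← key, hUo]
  have hYZ : Y * (Yᵀ * G) = 1 := mul_eq_one_comm.mp hYGY
  -- quadratic form of G
  have hquadG : ∀ w : Fin K → ℝ,
      w ⬝ᵥ (G *ᵥ w) = ∑ i, (d i)⁻¹ * ((Pm *ᵥ w) i) ^ 2 := by
    intro w
    rw [hG, ← mulVec_mulVec, ← mulVec_mulVec, dotProduct_mulVec, vecMul_transpose]
    simp only [dotProduct, mulVec_diagonal]
    exact Finset.sum_congr rfl fun i _ => by ring
  have hGlow : ∀ w : Fin K → ℝ,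
      (τ + δmax)⁻¹ * (lamK * (w ⬝ᵥ w)) ≤ w ⬝ᵥ (G *ᵥ w) := by
    intro w
    rw [hquadG w]
    have hp : (Pm *ᵥ w) ⬝ᵥ (Pm *ᵥ w) = ∑ i, ((Pm *ᵥ w) i) ^ 2 := by
      simp [dotProduct, sq]
    calc (τ + δmax)⁻¹ * (lamK * (w ⬝ᵥ w))
        ≤ (τ + δmax)⁻¹ * ((Pm *ᵥ w) ⬝ᵥ (Pm *ᵥ w)) :=
          mul_le_mul_of_nonneg_left (hray w).1 (inv_nonneg.mpr hb.le)
      _ = ∑ i, (τ + δmax)⁻¹ * ((Pm *ᵥ w) i) ^ 2 := by rw [hp, Finset.mul_sum]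
      _ ≤ ∑ i, (d i)⁻¹ * ((Pm *ᵥ w) i) ^ 2 := by
          apply Finset.sum_le_sum
          intro i _
          exact mul_le_mul_of_nonneg_right
            (inv_anti₀ (hdpos i) (hd i).2) (sq_nonneg _)
  have hGhigh : ∀ w : Fin K → ℝ,
      w ⬝ᵥ (G *ᵥ w) ≤ (τ + δmin)⁻¹ * (lam1 * (w ⬝ᵥ w)) := by
    intro w
    rw [hquadG w]
    have hp : (Pm *ᵥ w) ⬝ᵥ (Pm *ᵥ w) = ∑ i, ((Pm *ᵥ w) i) ^ 2 := by
      simp [dotProduct, sq]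
    calc ∑ i, (d i)⁻¹ * ((Pm *ᵥ w) i) ^ 2
        ≤ ∑ i, (τ + δmin)⁻¹ * ((Pm *ᵥ w) i) ^ 2 := by
          apply Finset.sum_le_sum
          intro i _
          exact mul_le_mul_of_nonneg_right
            (inv_anti₀ ha (hd i).1) (sq_nonneg _)
      _ = (τ + δmin)⁻¹ * ((Pm *ᵥ w) ⬝ᵥ (Pm *ᵥ w)) := by rw [hp, Finset.mul_sum]
      _ ≤ (τ + δmin)⁻¹ * (lam1 * (w ⬝ᵥ w)) :=
          mul_le_mul_of_nonneg_left (hray w).2 (inv_nonneg.mpr ha.le)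
  -- quadratic identity  u ⬝ u = (Yu)ᵀ G (Yu)
  have hid : ∀ u : Fin K → ℝ, u ⬝ᵥ u = (Y *ᵥ u) ⬝ᵥ (G *ᵥ (Y *ᵥ u)) := by
    intro u
    calc u ⬝ᵥ u = u ⬝ᵥ ((Yᵀ * G * Y) *ᵥ u) := by rw [hYGY, one_mulVec]
      _ = (Y *ᵥ u) ⬝ᵥ (G *ᵥ (Y *ᵥ u)) := by
          rw [← mulVec_mulVec, ← mulVec_mulVec, dotProduct_mulVec, vecMul_transpose]
  set α := (τ + δmax)⁻¹ * lamK with hα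
  set β := (τ + δmin)⁻¹ * lam1 with hβ
  have hαpos : 0 < α := mul_pos (inv_pos.mpr hb) hlamKpos
  have hβpos : 0 < β := mul_pos (inv_pos.mpr ha) hlam1pos
  have hYcontr : ∀ u : Fin K → ℝ, α * ((Y *ᵥ u) ⬝ᵥ (Y *ᵥ u)) ≤ u ⬝ᵥ u := by
    intro u
    rw [hid u]
    have := hGlow (Y *ᵥ u)
    rw [hα, mul_assoc]
    exact this
  have hYexp : ∀ u : Fin K → ℝ, u ⬝ᵥ u ≤ β * ((Y *ᵥ u) ⬝ᵥ (Y *ᵥ u)) := by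
    intro u
    rw [hid u]
    have := hGhigh (Y *ᵥ u)
    rw [hβ, mul_assoc]
    exact this
  -- the row vector
  set w : Fin K → ℝ := fun k => Pm i0 k with hw
  set t : Fin K → ℝ := w ᵥ* Y with ht
  have hUrow : ∀ j, U i0 j = (Real.sqrt (d i0))⁻¹ * t j := by
    intro j
    rw [key]
    simp only [Matrix.mul_apply, Matrix.diagonal_apply, ite_mul, zero_mul,
      Finset.sum_ite_eq, Finset.mem_univ, if_true]
    rw [ht, vecMul, hw]
    simp [dotProduct, Matrix.mul_apply]
  have hsum : ∑ j, (U i0 j) ^ 2 = (d i0)⁻¹ * (t ⬝ᵥ t) := by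
    simp only [hUrow, mul_pow]
    rw [← Finset.mul_sum]
    congr 1
    · rw [inv_pow, Real.sq_sqrt (hdpos i0).le]
    · simp [dotProduct, sq]
  -- bounds on w
  have hw1 : w ⬝ᵥ w ≤ 1 := by
    have := Finset.sum_sq_le_sq_sum_of_nonneg (s := Finset.univ)
      (f := w) (fun k _ => hnn i0 k)
    rw [hw] at this ⊢
    simpa [dotProduct, sq, hrow i0] using this
  have hwK : 1 ≤ (K : ℝ) * (w ⬝ᵥ w) := by
    have hcs := cs_dot w (fun (_ : Fin K) => (1:ℝ))
    have h1 : w ⬝ᵥ (fun (_ : Fin K) => (1:ℝ)) = 1 := by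
      simp [dotProduct, hw, hrow i0]
    have h2 : (fun (_ : Fin K) => (1:ℝ)) ⬝ᵥ (fun (_ : Fin K) => (1:ℝ)) = (K:ℝ) := by
      simp [dotProduct]
    rw [h1, h2] at hcs
    nlinarith [dot_self_nonneg' w]
  have hwpos : 0 < w ⬝ᵥ w := by nlinarith [dot_self_nonneg' w]
  -- bounds on t
  have htt : t ⬝ᵥ t = w ⬝ᵥ (Y *ᵥ t) := by
    rw [dotProduct_mulVec]
  have hQt_up : t ⬝ᵥ t ≤ α⁻¹ * (w ⬝ᵥ w) := by
    rcases eq_or_lt_of_le (dot_self_nonneg' t) with h0 | h0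
    · rw [← h0]
      exact mul_nonneg (inv_nonneg.mpr hαpos.le) (dot_self_nonneg' w)
    · have hcs := cs_dot w (Y *ᵥ t)
      have hY1 := hYcontr t
      rw [← htt] at hcs
      have key2 : α * (t ⬝ᵥ t) ≤ w ⬝ᵥ w :=
        quot_up α (t ⬝ᵥ t) ((Y *ᵥ t) ⬝ᵥ (Y *ᵥ t)) (w ⬝ᵥ w) hαpos h0
          (dot_self_nonneg' w) hcs hY1
      calc t ⬝ᵥ t = α⁻¹ * (α * (t ⬝ᵥ t)) := (inv_mul_cancel_left₀ hαpos.ne' _).symm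
        _ ≤ α⁻¹ * (w ⬝ᵥ w) :=
            mul_le_mul_of_nonneg_left key2 (inv_nonneg.mpr hαpos.le)
  have hQt_low : β⁻¹ * (w ⬝ᵥ w) ≤ t ⬝ᵥ t := by
    set z := (Yᵀ * G) *ᵥ w with hz
    have hYz : Y *ᵥ z = w := by
      rw [hz, mulVec_mulVec, hYZ, one_mulVec]
    have hwz : t ⬝ᵥ z = w ⬝ᵥ w := by
      rw [ht, ← dotProduct_mulVec, hYz]
    have hcs := cs_dot t z
    have hzz : z ⬝ᵥ z ≤ β * (w ⬝ᵥ w) := by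
      have := hYexp z
      rwa [hYz] at this
    rw [hwz] at hcs
    have key2 : w ⬝ᵥ w ≤ β * (t ⬝ᵥ t) :=
      quot_low β (t ⬝ᵥ t) (z ⬝ᵥ z) (w ⬝ᵥ w) hβpos (dot_self_nonneg' t) hwpos hcs hzz
    calc β⁻¹ * (w ⬝ᵥ w) ≤ β⁻¹ * (β * (t ⬝ᵥ t)) :=
          mul_le_mul_of_nonneg_left key2 (inv_nonneg.mpr hβpos.le)
      _ = t ⬝ᵥ t := inv_mul_cancel_left₀ hβpos.ne' _
  -- final assembly
  have hdi1 : (d i0)⁻¹ ≤ (τ + δmin)⁻¹ := inv_anti₀ ha (hd i0).1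
  have hdi2 : (τ + δmax)⁻¹ ≤ (d i0)⁻¹ := inv_anti₀ (hdpos i0) (hd i0).2
  have httn : 0 ≤ t ⬝ᵥ t := dot_self_nonneg' t
  constructor
  · -- lower bound
    have hnum : (τ + δmin) / (τ + δmax) * ((K:ℝ) * lam1)⁻¹ ≤ (d i0)⁻¹ * (t ⬝ᵥ t) := by
      have h1 : β⁻¹ * (K:ℝ)⁻¹ ≤ t ⬝ᵥ t := by
        have h2 : (K:ℝ)⁻¹ ≤ w ⬝ᵥ w := by
          rw [inv_le_iff_one_le_mul₀ hKR]
          linarith [hwK]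
        calc β⁻¹ * (K:ℝ)⁻¹ ≤ β⁻¹ * (w ⬝ᵥ w) :=
              mul_le_mul_of_nonneg_left h2 (inv_nonneg.mpr hβpos.le)
          _ ≤ t ⬝ᵥ t := hQt_low
      have h3 : (τ + δmax)⁻¹ * (β⁻¹ * (K:ℝ)⁻¹) ≤ (d i0)⁻¹ * (t ⬝ᵥ t) :=
        mul_le_mul hdi2 h1
          (mul_nonneg (inv_nonneg.mpr hβpos.le) (inv_nonneg.mpr hKR.le))
          (inv_nonneg.mpr (hdpos i0).le)
      have h4 : (τ + δmin) / (τ + δmax) * ((K:ℝ) * lam1)⁻¹ =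
          (τ + δmax)⁻¹ * (β⁻¹ * (K:ℝ)⁻¹) := by
        rw [hβ]
        simp only [mul_inv, inv_inv]
        ring
      rw [h4]
      exact h3
    calc Real.sqrt ((τ + δmin) / (τ + δmax)) * (Real.sqrt ((K : ℝ) * lam1))⁻¹
        = Real.sqrt ((τ + δmin) / (τ + δmax) * ((K:ℝ) * lam1)⁻¹) := by
          rw [← Real.sqrt_inv, ← Real.sqrt_mul (by positivity)]
      _ ≤ Real.sqrt (∑ j, (U i0 j) ^ 2) := by
          rw [hsum]
          exact Real.sqrt_le_sqrt hnum
  · -- upper bound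
    have hnum : (d i0)⁻¹ * (t ⬝ᵥ t) ≤ (τ + δmax) / (τ + δmin) * lamK⁻¹ := by
      have h1 : t ⬝ᵥ t ≤ α⁻¹ := by
        calc t ⬝ᵥ t ≤ α⁻¹ * (w ⬝ᵥ w) := hQt_up
          _ ≤ α⁻¹ * 1 := mul_le_mul_of_nonneg_left hw1 (inv_nonneg.mpr hαpos.le)
          _ = α⁻¹ := mul_one _
      have h3 : (d i0)⁻¹ * (t ⬝ᵥ t) ≤ (τ + δmin)⁻¹ * α⁻¹ :=
        mul_le_mul hdi1 h1 httn (inv_nonneg.mpr ha.le)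
      have h4 : (τ + δmin)⁻¹ * α⁻¹ = (τ + δmax) / (τ + δmin) * lamK⁻¹ := by
        rw [hα, mul_inv, inv_inv]
        ring
      calc (d i0)⁻¹ * (t ⬝ᵥ t) ≤ (τ + δmin)⁻¹ * α⁻¹ := h3
        _ = (τ + δmax) / (τ + δmin) * lamK⁻¹ := h4
    calc Real.sqrt (∑ j, (U i0 j) ^ 2)
        ≤ Real.sqrt ((τ + δmax) / (τ + δmin) * lamK⁻¹) := by
          rw [hsum]
          exact Real.sqrt_le_sqrt hnum
      _ = Real.sqrt ((τ + δmax) / (τ + δmin)) * (Real.sqrt lamK)⁻¹ := by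
          rw [← Real.sqrt_inv, ← Real.sqrt_mul (by positivity)]
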